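/- arXiv:2603.17862 — 4 statements merged into one kernel-verified Lean document; each statement's English description precedes it below -/
import Mathlib

section
/- If (x, p, α) is a d-dimensional lexicographic dividend equilibrium for the economy (u, ω) satisfying the strong cheapest bundle property, then for every N ≥ 1 the allocation x belongs to RC(u, ω, N); that is, LDE₊(u, ω) ⊆ ⋂_{N=1}^∞ RC(u, ω, N). -/
open Finset

/-- Dot product of two vectors in `ℝⁿ`. -/
def dotp {n : ℕ} (a b : Fin n → ℝ) : ℝ := ∑ j, a j * b j

/-- Membership in `Δⁿ₋`: nonnegative with coordinate sum at most 1. -/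
def InSimplexLe {n : ℕ} (y : Fin n → ℝ) : Prop := (∀ j, 0 ≤ y j) ∧ ∑ j, y j ≤ 1

/-- The set `M` of allocations: nonnegative doubly stochastic matrices. -/
def IsAlloc {n : ℕ} (x : Fin n → Fin n → ℝ) : Prop :=
  (∀ i j, 0 ≤ x i j) ∧ (∀ i, ∑ j, x i j = 1) ∧ (∀ j, ∑ i, x i j = 1)

/-- `k_i` (0-based): the first currency in which agent `i` has positive income,
or the last currency `d - 1` if there is none. -/
noncomputable def kIdx {n : ℕ} (d : ℕ) (p α : ℕ → Fin n → ℝ)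
    (ω : Fin n → Fin n → ℝ) (i : Fin n) : ℕ :=
  sInf ({k | k < d ∧ 0 < dotp (p k) (ω i) + α k i} ∪ {d - 1})

/-- The budget set `C^α_i(p)`. -/
def BudgetSet {n : ℕ} (d : ℕ) (p α : ℕ → Fin n → ℝ)
    (ω : Fin n → Fin n → ℝ) (i : Fin n) : Set (Fin n → ℝ) :=
  {y | InSimplexLe y ∧
    ∀ k ≤ kIdx d p α ω i, dotp (p k) y ≤ dotp (p k) (ω i) + α k i}

/-- `(x, p, α)` is a `d`-dimensional lexicographic dividend equilibrium for `(u, ω)`.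
Currencies are indexed 0-based by `k < d`. -/
def IsLDE {n : ℕ} (u ω : Fin n → Fin n → ℝ) (d : ℕ)
    (x : Fin n → Fin n → ℝ) (p α : ℕ → Fin n → ℝ) : Prop :=
  IsAlloc x ∧
  (∀ k, k < d → ∀ i, 0 ≤ α k i) ∧
  (∀ (j : Fin n) (k : ℕ), k < d → p k j ≠ 0 → (∀ l < k, p l j = 0) → 0 < p k j) ∧
  (∀ (i : Fin n) (k : ℕ), k < d →
    α k i = max (dotp (p k) (fun j => x i j - ω i j)) 0) ∧
  (∀ (i : Fin n), ∀ y ∈ BudgetSet d p α ω i, dotp (u i) y ≤ dotp (u i) (x i))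

/-- The strong cheapest bundle property. -/
def StrongCB {n : ℕ} (u : Fin n → Fin n → ℝ) (d : ℕ)
    (x : Fin n → Fin n → ℝ) (p : ℕ → Fin n → ℝ) : Prop :=
  ¬ ∃ (i : Fin n) (y : Fin n → ℝ) (k : ℕ),
      InSimplexLe y ∧ dotp (u i) (x i) ≤ dotp (u i) y ∧ k < d ∧
      (∀ l < k, dotp (p l) y = dotp (p l) (x i)) ∧
      dotp (p k) y < dotp (p k) (x i)

/-- A nonempty coalition of the `N`-fold replica economy rejects the replica allocation
induced by `x` (agent `(m, i)` has utilities `u i`, endowment `ω i`, allocation `x i`). -/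
def RejectsReplica {n : ℕ} (N : ℕ) (u ω x : Fin n → Fin n → ℝ) : Prop :=
  ∃ (C1 C2 : Finset (Fin N × Fin n)) (y : Fin N × Fin n → Fin n → ℝ),
    Disjoint C1 C2 ∧ (C1 ∪ C2).Nonempty ∧
    (∀ a ∈ C1 ∪ C2, InSimplexLe (y a)) ∧
    (∀ j, ∑ a ∈ C1 ∪ C2, y a j ≤ ∑ a ∈ C1, ω a.2 j + ∑ a ∈ C2, x a.2 j) ∧
    (∀ a ∈ C1, dotp (u a.2) (x a.2) < dotp (u a.2) (y a)) ∧
    (∀ a ∈ C2, dotp (u a.2) (x a.2) ≤ dotp (u a.2) (y a)) ∧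
    (C1 = ∅ → ∃ a ∈ C2, dotp (u a.2) (x a.2) < dotp (u a.2) (y a))

/- ### Lexicographic toolkit -/

/-- first nonzero entry (below `d`) exists and is positive -/
def LexPos (d : ℕ) (v : ℕ → ℝ) : Prop :=
  ∃ k, k < d ∧ 0 < v k ∧ ∀ l < k, v l = 0

def LexNN (d : ℕ) (v : ℕ → ℝ) : Prop :=
  (∀ k < d, v k = 0) ∨ LexPos d v

lemma lex_trichotomy (d : ℕ) (v : ℕ → ℝ) :
    (∀ k < d, v k = 0) ∨ ∃ k, k < d ∧ v k ≠ 0 ∧ ∀ l < k, v l = 0 := by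
  classical
  by_cases h : ∀ k < d, v k = 0
  · exact Or.inl h
  · push_neg at h
    obtain ⟨k, hk, hne⟩ := h
    have hex : ∃ k, k < d ∧ v k ≠ 0 := ⟨k, hk, hne⟩
    refine Or.inr ⟨Nat.find hex, (Nat.find_spec hex).1, (Nat.find_spec hex).2, ?_⟩
    intro l hl
    by_contra hne'
    exact absurd (Nat.find_le ⟨lt_trans hl (Nat.find_spec hex).1, hne'⟩) (not_le.mpr hl)

lemma LexNN_of_nonneg {d : ℕ} {v : ℕ → ℝ} (h : ∀ k < d, 0 ≤ v k) : LexNN d v := by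
  rcases lex_trichotomy d v with h0 | ⟨k, hk, hne, hz⟩
  · exact Or.inl h0
  · exact Or.inr ⟨k, hk, lt_of_le_of_ne (h k hk) (Ne.symm hne), hz⟩

lemma LexPos_add {d : ℕ} {v w : ℕ → ℝ} (hv : LexPos d v) (hw : LexNN d w) :
    LexPos d (fun k => v k + w k) := by
  obtain ⟨k1, hk1d, hk1p, hk1z⟩ := hv
  rcases hw with hz | ⟨k2, hk2d, hk2p, hk2z⟩
  · exact ⟨k1, hk1d, by simpa [hz k1 hk1d] using hk1p,
      fun l hl => by simp [hk1z l hl, hz l (lt_trans hl hk1d)]⟩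
  · rcases lt_trichotomy k1 k2 with h | h | h
    · exact ⟨k1, hk1d, by simpa [hk2z k1 h] using hk1p,
        fun l hl => by simp [hk1z l hl, hk2z l (lt_trans hl h)]⟩
    · subst h
      exact ⟨k1, hk1d, by simpa using add_pos hk1p hk2p,
        fun l hl => by simp [hk1z l hl, hk2z l hl]⟩
    · exact ⟨k2, hk2d, by simpa [hk1z k2 h] using hk2p,
        fun l hl => by simp [hk1z l (lt_trans hl h), hk2z l hl]⟩

lemma LexPos_add' {d : ℕ} {v w : ℕ → ℝ} (hv : LexNN d v) (hw : LexPos d w) :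
    LexPos d (fun k => v k + w k) := by
  have := LexPos_add hw hv
  simpa [add_comm] using this

lemma LexNN_add {d : ℕ} {v w : ℕ → ℝ} (hv : LexNN d v) (hw : LexNN d w) :
    LexNN d (fun k => v k + w k) := by
  rcases hv with hz | hp
  · rcases hw with hz' | hp'
    · exact Or.inl fun k hk => by simp [hz k hk, hz' k hk]
    · exact Or.inr (LexPos_add' (Or.inl hz) hp')
  · exact Or.inr (LexPos_add hp hw)

lemma LexNN_mul_right {d : ℕ} {v : ℕ → ℝ} (hv : LexNN d v) {c : ℝ} (hc : 0 ≤ c) :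
    LexNN d (fun k => v k * c) := by
  rcases eq_or_lt_of_le hc with h | h
  · exact Or.inl fun k hk => by simp [← h]
  · rcases hv with hz | ⟨k, hk, hp, hzall⟩
    · exact Or.inl fun k hk => by simp [hz k hk]
    · exact Or.inr ⟨k, hk, mul_pos hp h, fun l hl => by simp [hzall l hl]⟩

lemma LexNN_sum {ι : Type*} {d : ℕ} (s : Finset ι) (f : ι → ℕ → ℝ)
    (h : ∀ a ∈ s, LexNN d (f a)) : LexNN d (fun k => ∑ a ∈ s, f a k) := by
  classical
  induction s using Finset.induction_on with
  | empty => exact Or.inl fun k hk => by simp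
  | @insert a s' hni ih =>
      simp only [Finset.sum_insert hni]
      exact LexNN_add (h a (Finset.mem_insert_self a s'))
        (ih fun b hb => h b (Finset.mem_insert_of_mem hb))

lemma LexPos_sum {ι : Type*} {d : ℕ} (s : Finset ι) (f : ι → ℕ → ℝ) {a : ι}
    (ha : a ∈ s) (hpa : LexPos d (f a)) (h : ∀ b ∈ s, LexNN d (f b)) :
    LexPos d (fun k => ∑ b ∈ s, f b k) := by
  classical
  have hsum : ∀ k, ∑ b ∈ s, f b k = f a k + ∑ b ∈ s.erase a, f b k :=
    fun k => (Finset.add_sum_erase s (fun b => f b k) ha).symm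
  simp only [hsum]
  exact LexPos_add hpa (LexNN_sum _ _ fun b hb => h b (Finset.mem_of_mem_erase hb))

lemma LexPos_neg_false {d : ℕ} {v : ℕ → ℝ} (h1 : LexPos d v)
    (h2 : LexNN d (fun k => -v k)) : False := by
  obtain ⟨k1, hk1d, hk1p, hk1z⟩ := h1
  rcases h2 with hz | ⟨k2, hk2d, hk2p, hk2z⟩
  · have := hz k1 hk1d; simp at this; linarith
  · rcases lt_trichotomy k1 k2 with h | h | h
    · have := hk2z k1 h; simp at this; linarith
    · subst h; simp at hk2p; linarith
    · have := hk1z k2 h; simp [this] at hk2p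

lemma lexNN_zero_of_nonpos {d K : ℕ} {v : ℕ → ℝ} (h : LexNN d v) (hK : K ≤ d)
    (hnp : ∀ k < K, v k ≤ 0) : ∀ k < K, v k = 0 := by
  intro k hk
  rcases h with hz | ⟨k0, hk0d, hp, hz0⟩
  · exact hz k (lt_of_lt_of_le hk hK)
  · rcases lt_or_ge k k0 with h' | h'
    · exact hz0 k h'
    · exact absurd (hnp k0 (lt_of_le_of_lt h' hk)) (not_le.mpr hp)

lemma dotp_sub {n : ℕ} (a b c : Fin n → ℝ) :
    dotp a (fun j => b j - c j) = dotp a b - dotp a c := by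
  simp [dotp, mul_sub, Finset.sum_sub_distrib]


/-- an LDE satisfying the strong cheapest bundle property lies in the
rejective core of every replica economy: `LDE₊(u, ω) ⊆ ⋂_{N ≥ 1} RC(u, ω, N)`. -/
theorem lde_in_rejective_core {n : ℕ} (hn : 0 < n) (u ω : Fin n → Fin n → ℝ)
    (hu : ∀ i j, 0 ≤ u i j) (hω0 : ∀ i j, 0 ≤ ω i j)
    (hω1 : ∀ j, ∑ i, ω i j = 1)
    (d : ℕ) (hd : 1 ≤ d) (x : Fin n → Fin n → ℝ) (p α : ℕ → Fin n → ℝ)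
    (hLDE : IsLDE u ω d x p α) (hCB : StrongCB u d x p) :
    ∀ N : ℕ, 1 ≤ N → IsAlloc x ∧ ¬ RejectsReplica N u ω x := by
  classical
  obtain ⟨hxA, hα, hp, hαdef, hopt⟩ := hLDE
  intro N _
  refine ⟨hxA, ?_⟩
  rintro ⟨C1, C2, y, hdisj, hne, hsimp, hfeas, h5, h6, h7⟩
  -- columns of p are lexicographically nonnegative
  have hcol : ∀ j, LexNN d (fun k => p k j) := by
    intro j
    rcases lex_trichotomy d (fun k => p k j) with h0 | ⟨k, hk, hne', hz⟩
    · exact Or.inl h0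
    · exact Or.inr ⟨k, hk, hp j k hk hne' hz, hz⟩
  have hdotNN : ∀ z : Fin n → ℝ, (∀ j, 0 ≤ z j) → LexNN d (fun k => dotp (p k) z) := by
    intro z hz
    have := LexNN_sum (d := d) Finset.univ (fun j => fun k => p k j * z j)
      (fun j _ => LexNN_mul_right (hcol j) (hz j))
    simpa [dotp] using this
  have hkd : ∀ i, kIdx d p α ω i < d := by
    intro i
    have h1 : kIdx d p α ω i ≤ d - 1 :=
      Nat.sInf_le (Or.inr rfl)
    omega
  have hinc : ∀ i, ∀ k < kIdx d p α ω i, dotp (p k) (ω i) + α k i ≤ 0 := by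
    intro i k hk
    have hnm : k ∉ ({k | k < d ∧ 0 < dotp (p k) (ω i) + α k i} ∪ {d - 1} : Set ℕ) :=
      Nat.notMem_of_lt_sInf hk
    have hkd' : k < d := lt_trans hk (hkd i)
    by_contra hpos
    push_neg at hpos
    exact hnm (Or.inl ⟨hkd', hpos⟩)
  -- everything vanishes below k_i
  have hzero : ∀ i, ∀ k < kIdx d p α ω i,
      dotp (p k) (ω i) = 0 ∧ α k i = 0 ∧ dotp (p k) (x i) = 0 := by
    intro i
    have hKle : kIdx d p α ω i ≤ d := (hkd i).le
    have hIncNN : LexNN d (fun k => dotp (p k) (ω i) + α k i) :=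
      LexNN_add (hdotNN (ω i) (hω0 i)) (LexNN_of_nonneg (fun k hk => hα k hk i))
    have hinc0 : ∀ k < kIdx d p α ω i, dotp (p k) (ω i) + α k i = 0 :=
      lexNN_zero_of_nonpos hIncNN hKle (hinc i)
    have hωz : ∀ k < kIdx d p α ω i, dotp (p k) (ω i) = 0 := by
      refine lexNN_zero_of_nonpos (hdotNN (ω i) (hω0 i)) hKle ?_
      intro k hk
      have h1 := hinc0 k hk
      have h2 := hα k (lt_of_lt_of_le hk hKle) i
      linarith
    have hαz : ∀ k < kIdx d p α ω i, α k i = 0 := by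
      intro k hk
      have := hinc0 k hk
      have := hωz k hk
      linarith
    have hxz : ∀ k < kIdx d p α ω i, dotp (p k) (x i) = 0 := by
      refine lexNN_zero_of_nonpos (hdotNN (x i) (fun j => hxA.1 i j)) hKle ?_
      intro k hk
      have h1 := hαdef i k (lt_of_lt_of_le hk hKle)
      have h2 : dotp (p k) (fun j => x i j - ω i j) ≤ α k i := h1 ▸ le_max_left _ _
      rw [dotp_sub] at h2
      have := hωz k hk
      have := hαz k hk
      linarith
    exact fun k hk => ⟨hωz k hk, hαz k hk, hxz k hk⟩
  -- strong CB: improving bundles are lex-at-least-as-expensive as x i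
  have hvNN : ∀ (i : Fin n) (z : Fin n → ℝ), InSimplexLe z →
      dotp (u i) (x i) ≤ dotp (u i) z →
      LexNN d (fun k => dotp (p k) z - dotp (p k) (x i)) := by
    intro i z hz hle
    rcases lex_trichotomy d (fun k => dotp (p k) z - dotp (p k) (x i)) with
      h0 | ⟨k, hk, hne', hz0⟩
    · exact Or.inl h0
    · rcases lt_or_gt_of_ne hne' with hlt | hgt
      · exact absurd ⟨i, z, k, hz, hle, hk,
          fun l hl => by have := hz0 l hl; simp only [sub_eq_zero] at this; linarith, by simp at hlt; linarith⟩ hCB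
      · exact Or.inr ⟨k, hk, hgt, hz0⟩
  -- budget violation for strictly improving bundles
  have hviol : ∀ (i : Fin n) (z : Fin n → ℝ), InSimplexLe z →
      dotp (u i) (x i) < dotp (u i) z →
      ∃ k ≤ kIdx d p α ω i, dotp (p k) (ω i) + α k i < dotp (p k) z := by
    intro i z hz hlt
    by_contra hcon
    push_neg at hcon
    exact absurd (hopt i z ⟨hz, fun k hk => hcon k hk⟩) (not_le.mpr hlt)
  -- strictly improving bundles are lex-strictly more expensive than x i
  have hvPos : ∀ (i : Fin n) (z : Fin n → ℝ), InSimplexLe z →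
      dotp (u i) (x i) < dotp (u i) z →
      ∃ k0 k', k0 < d ∧ 0 < dotp (p k0) z - dotp (p k0) (x i) ∧
        (∀ l < k0, dotp (p l) z - dotp (p l) (x i) = 0) ∧
        k0 ≤ k' ∧ k' ≤ kIdx d p α ω i ∧
        dotp (p k') (ω i) + α k' i < dotp (p k') z := by
    intro i z hz hlt
    obtain ⟨k', hk'le, hk'⟩ := hviol i z hz hlt
    have hk'd : k' < d := lt_of_le_of_lt hk'le (hkd i)
    have hxb : dotp (p k') (x i) ≤ dotp (p k') (ω i) + α k' i := by
      have h1 := hαdef i k' hk'd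
      have h2 : dotp (p k') (fun j => x i j - ω i j) ≤ α k' i := h1 ▸ le_max_left _ _
      rw [dotp_sub] at h2
      linarith
    have hvk : 0 < dotp (p k') z - dotp (p k') (x i) := by linarith
    rcases hvNN i z hz hlt.le with h0 | ⟨k0, hk0d, hp0, hz0⟩
    · have := h0 k' hk'd; simp at this; linarith
    · have hk0le : k0 ≤ k' := by
        by_contra hgt
        push_neg at hgt
        have := hz0 k' hgt
        simp at this
        linarith
      exact ⟨k0, k', hk0d, hp0, hz0, hk0le, hk'le, hk'⟩
  -- strictly improving bundles are lex-strictly more expensive than ω i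
  have hwPos : ∀ (i : Fin n) (z : Fin n → ℝ), InSimplexLe z →
      dotp (u i) (x i) < dotp (u i) z →
      LexPos d (fun k => dotp (p k) z - dotp (p k) (ω i)) := by
    intro i z hz hlt
    obtain ⟨k0, k', hk0d, hp0, hz0, hk0le, hk'le, hk'⟩ := hvPos i z hz hlt
    rcases lt_or_ge k0 (kIdx d p α ω i) with hcase | hcase
    · refine ⟨k0, hk0d, ?_, ?_⟩
      · show 0 < dotp (p k0) z - dotp (p k0) (ω i)
        have h1 := (hzero i k0 hcase).1
        have h3 := (hzero i k0 hcase).2.2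
        linarith
      · intro l hl
        show dotp (p l) z - dotp (p l) (ω i) = 0
        have h1 := (hzero i l (lt_trans hl hcase)).1
        have h3 := (hzero i l (lt_trans hl hcase)).2.2
        have := hz0 l hl
        linarith
    · -- here kIdx ≤ k0 ≤ k' ≤ kIdx, so k' < d and everything below k' vanishes
      have hk'k0 : k' ≤ k0 := le_trans hk'le hcase
      have hk'd : k' < d := lt_of_le_of_lt hk'le (hkd i)
      refine ⟨k', hk'd, ?_, ?_⟩
      · show 0 < dotp (p k') z - dotp (p k') (ω i)
        have hαnn := hα k' hk'd i
        linarith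
      · intro l hl
        show dotp (p l) z - dotp (p l) (ω i) = 0
        have hlK : l < kIdx d p α ω i := lt_of_lt_of_le hl hk'le
        have h1 := (hzero i l hlK).1
        have h3 := (hzero i l hlK).2.2
        have := hz0 l (lt_of_lt_of_le hl hk'k0)
        linarith
  -- assemble the aggregate lexicographic surplus
  set S : ℕ → ℝ := fun k =>
    (∑ a ∈ C1, (dotp (p k) (y a) - dotp (p k) (ω a.2))) +
    (∑ a ∈ C2, (dotp (p k) (y a) - dotp (p k) (x a.2))) with hS
  have hC1NN : ∀ a ∈ C1, LexNN d (fun k => dotp (p k) (y a) - dotp (p k) (ω a.2)) := by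
    intro a ha
    exact Or.inr (hwPos a.2 (y a) (hsimp a (Finset.mem_union_left _ ha)) (h5 a ha))
  have hC2NN : ∀ a ∈ C2, LexNN d (fun k => dotp (p k) (y a) - dotp (p k) (x a.2)) :=
    fun a ha => hvNN a.2 (y a) (hsimp a (Finset.mem_union_right _ ha)) (h6 a ha)
  have hSPos : LexPos d S := by
    rcases C1.eq_empty_or_nonempty with he | ⟨a, ha⟩
    · obtain ⟨a, ha2, hstrict⟩ := h7 he
      have h2pos : LexPos d (fun k => ∑ b ∈ C2, (dotp (p k) (y b) - dotp (p k) (x b.2))) := by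
        refine LexPos_sum C2 _ ha2 ?_ hC2NN
        obtain ⟨k0, k', hk0d, hp0, hz0, _, _, _⟩ :=
          hvPos a.2 (y a) (hsimp a (Finset.mem_union_right _ ha2)) hstrict
        exact ⟨k0, hk0d, hp0, hz0⟩
      rw [hS]
      exact LexPos_add'
        (LexNN_sum C1 (fun a => fun k => dotp (p k) (y a) - dotp (p k) (ω a.2)) hC1NN)
        h2pos
    · have h1pos : LexPos d (fun k => ∑ b ∈ C1, (dotp (p k) (y b) - dotp (p k) (ω b.2))) :=
        LexPos_sum C1 _ ha
          (hwPos a.2 (y a) (hsimp a (Finset.mem_union_left _ ha)) (h5 a ha)) hC1NN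
      rw [hS]
      exact LexPos_add h1pos
        (LexNN_sum C2 (fun a => fun k => dotp (p k) (y a) - dotp (p k) (x a.2)) hC2NN)
  -- compute S as a price-weighted excess demand, which is lex-nonpositive by feasibility
  have hswap : ∀ (s : Finset (Fin N × Fin n)) (f : Fin N × Fin n → Fin n → ℝ) (k : ℕ),
      ∑ a ∈ s, dotp (p k) (f a) = ∑ j, p k j * ∑ a ∈ s, f a j := by
    intro s f k
    simp only [dotp, Finset.mul_sum]
    rw [Finset.sum_comm]
  have hSform : ∀ k, S k = ∑ j, p k j *
      (∑ a ∈ C1 ∪ C2, y a j - (∑ a ∈ C1, ω a.2 j + ∑ a ∈ C2, x a.2 j)) := by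
    intro k
    rw [hS]
    simp only [Finset.sum_sub_distrib]
    rw [hswap C1 y, hswap C2 y, hswap C1 (fun a => ω a.2), hswap C2 (fun a => x a.2)]
    have expand : ∀ j, (∑ a ∈ C1 ∪ C2, y a j) = ∑ a ∈ C1, y a j + ∑ a ∈ C2, y a j :=
      fun j => Finset.sum_union hdisj
    simp only [expand]
    rw [← Finset.sum_sub_distrib, ← Finset.sum_sub_distrib, ← Finset.sum_add_distrib]
    refine Finset.sum_congr rfl fun j _ => by ring
  have hSNeg : LexNN d (fun k => -S k) := by
    have heq : (fun k => -S k) = fun k => ∑ j,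
        p k j * ((∑ a ∈ C1, ω a.2 j + ∑ a ∈ C2, x a.2 j) - ∑ a ∈ C1 ∪ C2, y a j) := by
      funext k
      rw [hSform k]
      rw [← Finset.sum_neg_distrib]
      refine Finset.sum_congr rfl fun j _ => by ring
    rw [heq]
    exact LexNN_sum Finset.univ _ fun j _ =>
      LexNN_mul_right (hcol j) (sub_nonneg.mpr (hfeas j))
  exact LexPos_neg_false hSPos hSNeg
end

section
/- Let (x, p, α) be a d-dimensional lexicographic dividend equilibrium for the economy (u, ω) satisfying the strong cheapest bundle property. For each good j define k^j := min({k : p^{(k)}_j ≠ 0} ∪ {d}), and for each agent i let k_i := min({k : p^{(k)} · ω_i + α^{(k)}_i > 0} ∪ {d}). Then for every agent i and every good j with k^j < k_i, one has x_{ij} = 0 and ω_{ij} = 0. -/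
open Finset

/-- `k^j` (0-based): the first currency in which good `j` has a nonzero price,
or the last currency `d - 1` if there is none. -/
noncomputable def kGood {n : ℕ} (d : ℕ) (p : ℕ → Fin n → ℝ) (j : Fin n) : ℕ :=
  sInf ({k | k < d ∧ p k j ≠ 0} ∪ {d - 1})

lemma aux_no_holdings {n : ℕ} (ω : Fin n → Fin n → ℝ) (hω0 : ∀ i j, 0 ≤ ω i j)
    (d : ℕ) (x : Fin n → Fin n → ℝ) (p α : ℕ → Fin n → ℝ)
    (hx0 : ∀ i j, 0 ≤ x i j)
    (hα : ∀ k, k < d → ∀ i, 0 ≤ α k i)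
    (hpos : ∀ (j : Fin n) (k : ℕ), k < d → p k j ≠ 0 → (∀ l < k, p l j = 0) → 0 < p k j)
    (hαdef : ∀ (i : Fin n) (k : ℕ), k < d →
      α k i = max (dotp (p k) (fun j => x i j - ω i j)) 0) :
    ∀ k (i : Fin n), k < kIdx d p α ω i → ∀ j, kGood d p j ≤ k →
      x i j = 0 ∧ ω i j = 0 := by
  intro k
  induction k using Nat.strong_induction_on with
  | _ k IH =>
    intro i hk j hj
    have hki_le : kIdx d p α ω i ≤ d - 1 := Nat.sInf_le (Or.inr rfl)
    have hkd1 : k < d - 1 := lt_of_lt_of_le hk hki_le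
    have hkd : k < d := lt_of_lt_of_le hkd1 (Nat.sub_le d 1)
    rcases lt_or_eq_of_le hj with hj' | hj'
    · exact IH _ hj' i (hj'.trans hk) j le_rfl
    -- kGood j = k
    -- facts about column prices at tier k
    have hpk : ∀ j' : Fin n, kGood d p j' = k → 0 < p k j' := by
      intro j' hj''
      have hmem : k ∈ ({m | m < d ∧ p m j' ≠ 0} ∪ {d - 1} : Set ℕ) := by
        rw [← hj'']
        exact Nat.sInf_mem ⟨d - 1, Or.inr rfl⟩
      rcases hmem with hmem | hmem
      · refine hpos j' k hkd hmem.2 ?_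
        intro l hl
        have hlk : l < kGood d p j' := by rw [hj'']; exact hl
        have hl' : l ∉ ({m | m < d ∧ p m j' ≠ 0} ∪ {d - 1} : Set ℕ) :=
          Nat.notMem_of_lt_sInf hlk
        by_contra hne
        exact hl' (Or.inl ⟨lt_trans hl hkd, hne⟩)
      · exact absurd hmem (Nat.ne_of_lt hkd1)
    have hpk0 : ∀ j' : Fin n, k < kGood d p j' → p k j' = 0 := by
      intro j' hj''
      have : k ∉ ({m | m < d ∧ p m j' ≠ 0} ∪ {d - 1} : Set ℕ) :=
        Nat.notMem_of_lt_sInf hj''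
      by_contra hne
      exact this (Or.inl ⟨hkd, hne⟩)
    have hterm : ∀ j' : Fin n, 0 ≤ p k j' * x i j' ∧ 0 ≤ p k j' * ω i j' := by
      intro j'
      rcases lt_trichotomy (kGood d p j') k with h | h | h
      · obtain ⟨hx', hω'⟩ := IH _ h i (h.trans hk) j' le_rfl
        simp [hx', hω']
      · exact ⟨mul_nonneg (hpk j' h).le (hx0 i j'),
          mul_nonneg (hpk j' h).le (hω0 i j')⟩
      · simp [hpk0 j' h]
    have hdx : 0 ≤ dotp (p k) (x i) :=
      Finset.sum_nonneg fun j' _ => (hterm j').1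
    have hdω : 0 ≤ dotp (p k) (ω i) :=
      Finset.sum_nonneg fun j' _ => (hterm j').2
    have hinc : dotp (p k) (ω i) + α k i ≤ 0 := by
      have : k ∉ ({m | m < d ∧ 0 < dotp (p m) (ω i) + α m i} ∪ {d - 1} : Set ℕ) :=
        Nat.notMem_of_lt_sInf hk
      by_contra hne
      exact this (Or.inl ⟨hkd, lt_of_not_ge hne⟩)
    have hα0 : α k i = 0 :=
      le_antisymm (by linarith [hα k hkd i]) (hα k hkd i)
    have hdω0 : dotp (p k) (ω i) = 0 := by linarith [hα k hkd i]
    have hsplit : dotp (p k) (fun j => x i j - ω i j)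
        = dotp (p k) (x i) - dotp (p k) (ω i) := by
      simp [dotp, mul_sub, Finset.sum_sub_distrib]
    have hdx0 : dotp (p k) (x i) = 0 := by
      have h1 := hαdef i k hkd
      rw [hα0, hsplit, hdω0] at h1
      have h2 := le_max_left (dotp (p k) (x i) - 0) 0
      rw [← h1] at h2
      linarith
    have hxterm : p k j * x i j = 0 := by
      have := (Finset.sum_eq_zero_iff_of_nonneg
        (fun j' _ => (hterm j').1)).mp hdx0 j (Finset.mem_univ j)
      exact this
    have hωterm : p k j * ω i j = 0 := by
      exact (Finset.sum_eq_zero_iff_of_nonneg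
        (fun j' _ => (hterm j').2)).mp hdω0 j (Finset.mem_univ j)
    have hpj : 0 < p k j := hpk j hj'
    exact ⟨by
      rcases mul_eq_zero.mp hxterm with h | h
      · exact absurd h hpj.ne'
      · exact h,
      by
      rcases mul_eq_zero.mp hωterm with h | h
      · exact absurd h hpj.ne'
      · exact h⟩

/-- in an LDE satisfying the strong cheapest bundle property, an agent
neither holds nor is endowed with goods priced in currencies more valuable than the
first currency in which she has positive income. -/
theorem no_holdings_of_higher_tier_goods {n : ℕ} (hn : 0 < n)
    (u ω : Fin n → Fin n → ℝ)
    (hu : ∀ i j, 0 ≤ u i j) (hω0 : ∀ i j, 0 ≤ ω i j)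
    (hω1 : ∀ j, ∑ i, ω i j = 1)
    (d : ℕ) (hd : 1 ≤ d) (x : Fin n → Fin n → ℝ) (p α : ℕ → Fin n → ℝ)
    (hLDE : IsLDE u ω d x p α) (hCB : StrongCB u d x p) :
    ∀ (i : Fin n) (j : Fin n), kGood d p j < kIdx d p α ω i →
      x i j = 0 ∧ ω i j = 0 := by
  intro i j hij
  obtain ⟨⟨hx0, _, _⟩, hα, hpos, hαdef, _⟩ := hLDE
  exact aux_no_holdings ω hω0 d x p α hx0 hα hpos hαdef (kGood d p j) i hij j le_rfl
end

section
/- Let λ ∈ ℝⁿ with λ ≥ 0 and let x ∈ M maximize ∑_i λ_i (u_i · y_i) over all y ∈ M. Then for every agent i and every bundle y ∈ Δⁿ₋ with u_i · y ≥ u_i · x_i, one has p(λ) · y ≥ p(λ) · x_i, where p(λ) is the VCG price vector at weights λ. -/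
open Finset

/-- The feasible set for the relaxed welfare problem where the supply of good `l`
is doubled. -/
def FeasRelax {n : ℕ} (l : Fin n) (x : Fin n → Fin n → ℝ) : Prop :=
  (∀ i j, 0 ≤ x i j) ∧ (∀ i, ∑ j, x i j ≤ 1) ∧
  (∀ j, j ≠ l → ∑ i, x i j ≤ 1) ∧ (∑ i, x i l ≤ 2)

/-- `W(λ)`: the maximum weighted welfare over allocations. -/
noncomputable def Wval {n : ℕ} (u : Fin n → Fin n → ℝ) (lam : Fin n → ℝ) : ℝ :=
  sSup ((fun x => ∑ i, lam i * dotp (u i) (x i)) '' {x | IsAlloc x})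

/-- `W_l(λ)`: the maximum weighted welfare when the supply of good `l` is doubled. -/
noncomputable def Wrelax {n : ℕ} (u : Fin n → Fin n → ℝ) (lam : Fin n → ℝ)
    (l : Fin n) : ℝ :=
  sSup ((fun x => ∑ i, lam i * dotp (u i) (x i)) '' {x | FeasRelax l x})

/-- The VCG price vector `p(λ)`, with `p_l(λ) = W_l(λ) − W(λ)`. -/
noncomputable def vcg {n : ℕ} (u : Fin n → Fin n → ℝ) (lam : Fin n → ℝ) :
    Fin n → ℝ :=
  fun l => Wrelax u lam l - Wval u lam

namespace VCGP

/-- positive lower bound for finitely many positive values -/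
lemma exists_pos_min {α : Type*} (F : Finset α) (f : α → ℝ) (hf : ∀ a ∈ F, 0 < f a) :
    ∃ δ : ℝ, 0 < δ ∧ ∀ a ∈ F, δ ≤ f a := by
  classical
  induction F using Finset.induction with
  | empty => exact ⟨1, one_pos, by simp⟩
  | @insert a s ha ih =>
    obtain ⟨δ, hδ, hδle⟩ := ih (fun b hb => hf b (Finset.mem_insert_of_mem hb))
    refine ⟨min δ (f a), lt_min hδ (hf a (Finset.mem_insert_self a s)), ?_⟩
    intro b hb
    rcases Finset.mem_insert.mp hb with rfl | hb
    · exact min_le_right _ _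
    · exact le_trans (min_le_left _ _) (hδle b hb)

variable {n : ℕ}

/-- dual objective value -/
noncomputable def dval (π q : Fin n → ℝ) : ℝ := (∑ k, π k) + ∑ b, q b

/-- dual feasibility -/
def DF (u : Fin n → Fin n → ℝ) (lam : Fin n → ℝ) (π q : Fin n → ℝ) : Prop :=
  (∀ k, 0 ≤ π k) ∧ (∀ b, 0 ≤ q b) ∧ ∀ k b, lam k * u k b ≤ π k + q b

/-- 0/1 matrix from an assignment function -/
def fmat (τ : Fin n → Fin n) : Fin n → Fin n → ℝ := fun k j => if τ k = j then 1 else 0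

/-- value of an assignment function -/
noncomputable def pval (u : Fin n → Fin n → ℝ) (lam : Fin n → ℝ) (τ : Fin n → Fin n) : ℝ :=
  ∑ k, lam k * u k (τ k)

noncomputable def cnt (τ : Fin n → Fin n) (g : Fin n) : ℕ :=
  (univ.filter fun k => τ k = g).card

lemma dotp_fmat (u : Fin n → Fin n → ℝ) (τ : Fin n → Fin n) (k : Fin n) :
    dotp (u k) (fmat τ k) = u k (τ k) := by
  simp [dotp, fmat, mul_ite]

lemma sum_pval (u : Fin n → Fin n → ℝ) (lam : Fin n → ℝ) (τ : Fin n → Fin n) :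
    ∑ k, lam k * dotp (u k) (fmat τ k) = pval u lam τ := by
  simp [dotp_fmat, pval]

lemma row_fmat (τ : Fin n → Fin n) (k : Fin n) : ∑ j, fmat τ k j = 1 := by
  simp [fmat]

lemma col_fmat (τ : Fin n → Fin n) (j : Fin n) :
    ∑ k, fmat τ k j = (cnt τ j : ℝ) := by
  classical
  simp [fmat, cnt]

lemma cnt_bij {σ : Fin n → Fin n} (hσ : Function.Bijective σ) (g : Fin n) :
    cnt σ g = 1 := by
  classical
  have : univ.filter (fun k => σ k = g) = {(Equiv.ofBijective σ hσ).symm g} := by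
    ext k
    rw [Finset.mem_filter, Finset.mem_singleton, Equiv.eq_symm_apply]
    simp [Equiv.ofBijective_apply]
  simp [cnt, this]

lemma alloc_fmat {σ : Fin n → Fin n} (hσ : Function.Bijective σ) : IsAlloc (fmat σ) := by
  refine ⟨fun k j => by unfold fmat; positivity, fun k => row_fmat σ k, fun j => ?_⟩
  rw [col_fmat, cnt_bij hσ]; norm_num

lemma feasRelax_fmat (m : Fin n) (τ : Fin n → Fin n)
    (h : ∀ g, cnt τ g ≤ if g = m then 2 else 1) : FeasRelax m (fmat τ) := by
  refine ⟨fun k j => by unfold fmat; positivity, fun k => (row_fmat τ k).le, ?_, ?_⟩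
  · intro j hj
    rw [col_fmat]
    have := h j
    rw [if_neg hj] at this
    exact_mod_cast this
  · rw [col_fmat]
    have := h m
    rw [if_pos rfl] at this
    exact_mod_cast this

section Weak
variable {u : Fin n → Fin n → ℝ} {lam : Fin n → ℝ} {π q : Fin n → ℝ}

lemma value_le_aux (hDF : DF u lam π q) (z : Fin n → Fin n → ℝ)
    (hz : ∀ k j, 0 ≤ z k j) :
    ∑ k, lam k * dotp (u k) (z k) ≤
      (∑ k, π k * ∑ j, z k j) + ∑ j, q j * ∑ k, z k j := by
  have key : ∑ k, lam k * dotp (u k) (z k) = ∑ k, ∑ j, (lam k * u k j) * z k j := by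
    refine Finset.sum_congr rfl fun k _ => ?_
    rw [dotp, Finset.mul_sum]
    exact Finset.sum_congr rfl fun j _ => by ring
  rw [key]
  have key2 : (∑ k, π k * ∑ j, z k j) + ∑ j, q j * ∑ k, z k j
      = ∑ k, ∑ j, (π k + q j) * z k j := by
    have e1 : ∑ j, q j * ∑ k, z k j = ∑ k, ∑ j, q j * z k j := by
      rw [show (∑ j, q j * ∑ k, z k j) = ∑ j, ∑ k, q j * z k j from
        Finset.sum_congr rfl fun j _ => Finset.mul_sum _ _ _]
      exact Finset.sum_comm
    rw [e1, ← Finset.sum_add_distrib]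
    refine Finset.sum_congr rfl fun k _ => ?_
    rw [Finset.mul_sum, ← Finset.sum_add_distrib]
    exact Finset.sum_congr rfl fun j _ => by ring
  rw [key2]
  refine Finset.sum_le_sum fun k _ => Finset.sum_le_sum fun j _ => ?_
  exact mul_le_mul_of_nonneg_right (hDF.2.2 k j) (hz k j)

/-- weak duality against an allocation -/
lemma weak_duality (hDF : DF u lam π q) (z : Fin n → Fin n → ℝ) (hz : IsAlloc z) :
    ∑ k, lam k * dotp (u k) (z k) ≤ dval π q := by
  have := value_le_aux hDF z hz.1
  simpa [dval, hz.2.1, hz.2.2] using this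

/-- dual bound for the relaxed problem -/
lemma relax_bound (hDF : DF u lam π q) (l : Fin n) (z : Fin n → Fin n → ℝ)
    (hz : FeasRelax l z) :
    ∑ k, lam k * dotp (u k) (z k) ≤ dval π q + q l := by
  refine le_trans (value_le_aux hDF z hz.1) ?_
  have h1 : ∑ k, π k * ∑ j, z k j ≤ ∑ k, π k := by
    refine Finset.sum_le_sum fun k _ => ?_
    calc π k * ∑ j, z k j ≤ π k * 1 := by
          exact mul_le_mul_of_nonneg_left (hz.2.1 k) (hDF.1 k)
      _ = π k := mul_one _
  have h2 : ∑ j, q j * ∑ k, z k j ≤ (∑ b, q b) + q l := by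
    have : ∀ j, q j * ∑ k, z k j ≤ q j + (if j = l then q l else 0) := by
      intro j
      by_cases hj : j = l
      · subst hj
        simp only [if_pos rfl]
        calc q j * ∑ k, z k j ≤ q j * 2 :=
              mul_le_mul_of_nonneg_left hz.2.2.2 (hDF.2.1 j)
          _ = q j + q j := by ring
      · simp only [if_neg hj, add_zero]
        calc q j * ∑ k, z k j ≤ q j * 1 :=
              mul_le_mul_of_nonneg_left (hz.2.2.1 j hj) (hDF.2.1 j)
          _ = q j := mul_one _
    calc ∑ j, q j * ∑ k, z k j ≤ ∑ j, (q j + (if j = l then q l else 0)) :=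
          Finset.sum_le_sum fun j _ => this j
      _ = (∑ b, q b) + q l := by rw [Finset.sum_add_distrib]; simp
  calc (∑ k, π k * ∑ j, z k j) + ∑ j, q j * ∑ k, z k j
      ≤ (∑ k, π k) + ((∑ b, q b) + q l) := add_le_add h1 h2
    _ = dval π q + q l := by rw [dval]; ring
end Weak

/-- `Wval` equals the value of the maximizer. -/
lemma Wval_eq {u : Fin n → Fin n → ℝ} {lam : Fin n → ℝ} {x : Fin n → Fin n → ℝ}
    (hx : IsAlloc x)
    (hmax : ∀ y, IsAlloc y →
      ∑ i, lam i * dotp (u i) (y i) ≤ ∑ i, lam i * dotp (u i) (x i)) :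
    Wval u lam = ∑ i, lam i * dotp (u i) (x i) := by
  apply IsGreatest.csSup_eq
  constructor
  · exact ⟨x, hx, rfl⟩
  · rintro v ⟨z, hz, rfl⟩
    exact hmax z hz

section Compact
variable (u : Fin n → Fin n → ℝ) (lam : Fin n → ℝ)

def Dset (C : ℝ) : Set ((Fin n → ℝ) × (Fin n → ℝ)) :=
  {p | DF u lam p.1 p.2 ∧ dval p.1 p.2 ≤ C}

lemma cont_coord1 (k : Fin n) : Continuous fun p : (Fin n → ℝ) × (Fin n → ℝ) => p.1 k :=
  (continuous_apply k).comp continuous_fst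

lemma cont_coord2 (b : Fin n) : Continuous fun p : (Fin n → ℝ) × (Fin n → ℝ) => p.2 b :=
  (continuous_apply b).comp continuous_snd

lemma cont_dval : Continuous fun p : (Fin n → ℝ) × (Fin n → ℝ) => dval p.1 p.2 := by
  unfold dval
  exact (continuous_finset_sum _ fun k _ => cont_coord1 k).add
    (continuous_finset_sum _ fun b _ => cont_coord2 b)

lemma isClosed_Dset (C : ℝ) : IsClosed (Dset u lam C) := by
  have : Dset u lam C =
      (⋂ k, {p : (Fin n → ℝ) × (Fin n → ℝ) | 0 ≤ p.1 k}) ∩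
      ((⋂ b, {p : (Fin n → ℝ) × (Fin n → ℝ) | 0 ≤ p.2 b}) ∩
      ((⋂ k, ⋂ b, {p : (Fin n → ℝ) × (Fin n → ℝ) | lam k * u k b ≤ p.1 k + p.2 b}) ∩
      {p : (Fin n → ℝ) × (Fin n → ℝ) | dval p.1 p.2 ≤ C})) := by
    ext p
    simp only [Dset, DF, Set.mem_inter_iff, Set.mem_iInter, Set.mem_setOf_eq]
    tauto
  rw [this]
  refine (isClosed_iInter fun k => isClosed_le continuous_const (cont_coord1 k)).inter
    ((isClosed_iInter fun b => isClosed_le continuous_const (cont_coord2 b)).inter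
    ((isClosed_iInter fun k => isClosed_iInter fun b =>
        isClosed_le continuous_const ((cont_coord1 k).add (cont_coord2 b))).inter
      (isClosed_le cont_dval continuous_const)))

lemma isCompact_Dset (C : ℝ) : IsCompact (Dset u lam C) := by
  refine IsCompact.of_isClosed_subset (isCompact_Icc
    (a := ((fun _ => 0, fun _ => 0) : (Fin n → ℝ) × (Fin n → ℝ)))
    (b := ((fun _ => C, fun _ => C) : (Fin n → ℝ) × (Fin n → ℝ))))
    (isClosed_Dset u lam C) ?_
  rintro ⟨π, q⟩ ⟨⟨hπ, hq, _⟩, hval⟩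
  have hsq : 0 ≤ ∑ b, q b := Finset.sum_nonneg fun b _ => hq b
  have hsp : 0 ≤ ∑ k, π k := Finset.sum_nonneg fun k _ => hπ k
  have hπC : ∀ k, π k ≤ C := by
    intro k
    calc π k ≤ ∑ k', π k' := Finset.single_le_sum (fun k' _ => hπ k') (Finset.mem_univ k)
      _ ≤ dval π q := le_add_of_nonneg_right hsq
      _ ≤ C := hval
  have hqC : ∀ b, q b ≤ C := by
    intro b
    calc q b ≤ ∑ b', q b' := Finset.single_le_sum (fun b' _ => hq b') (Finset.mem_univ b)
      _ ≤ dval π q := le_add_of_nonneg_left hsp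
      _ ≤ C := hval
  constructor
  · exact ⟨fun k => hπ k, fun b => hq b⟩
  · exact ⟨fun k => hπC k, fun b => hqC b⟩

lemma exists_min_on_Dset (C : ℝ) (hne : (Dset u lam C).Nonempty)
    (f : ((Fin n → ℝ) × (Fin n → ℝ)) → ℝ) (hf : Continuous f) :
    ∃ p ∈ Dset u lam C, ∀ p' ∈ Dset u lam C, f p ≤ f p' := by
  obtain ⟨p, hp, hmin⟩ :=
    (isCompact_Dset u lam C).exists_isMinOn hne hf.continuousOn
  exact ⟨p, hp, fun p' hp' => hmin hp'⟩

end Compact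

lemma sum_indicator (A : Finset (Fin n)) (δ : ℝ) :
    ∑ k, (if k ∈ A then δ else 0) = A.card * δ := by
  rw [Finset.sum_ite_mem, Finset.univ_inter, Finset.sum_const, nsmul_eq_mul]

section Strong
variable {u : Fin n → Fin n → ℝ} {lam : Fin n → ℝ} {x : Fin n → Fin n → ℝ}

theorem strong_duality (hu : ∀ i j, 0 ≤ u i j) (hlam : ∀ i, 0 ≤ lam i)
    (hx : IsAlloc x)
    (hmax : ∀ y, IsAlloc y →
      ∑ i, lam i * dotp (u i) (y i) ≤ ∑ i, lam i * dotp (u i) (x i)) :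
    ∃ (π q : Fin n → ℝ) (σ : Fin n → Fin n), DF u lam π q ∧ Function.Bijective σ ∧
      dval π q = ∑ i, lam i * dotp (u i) (x i) ∧
      pval u lam σ = ∑ i, lam i * dotp (u i) (x i) := by
  classical
  set S := ∑ i, lam i * dotp (u i) (x i) with hS
  set M := ∑ k, ∑ b, lam k * u k b with hM
  have huv : ∀ k b, 0 ≤ lam k * u k b := fun k b => mul_nonneg (hlam k) (hu k b)
  have hMb : ∀ k b, lam k * u k b ≤ M := by
    intro k b
    calc lam k * u k b ≤ ∑ b', lam k * u k b' :=
          Finset.single_le_sum (fun b' _ => huv k b') (Finset.mem_univ b)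
      _ ≤ M := Finset.single_le_sum
          (f := fun k' => ∑ b', lam k' * u k' b')
          (fun k' _ => Finset.sum_nonneg fun b' _ => huv k' b') (Finset.mem_univ k)
  set C := ((n : ℝ) + 1) * M with hC
  have hM0 : 0 ≤ M := Finset.sum_nonneg fun k _ => Finset.sum_nonneg fun b _ => huv k b
  have hne : (Dset u lam C).Nonempty := by
    refine ⟨(fun _ => M, fun _ => 0), ⟨⟨fun _ => hM0, fun _ => le_refl 0, ?_⟩, ?_⟩⟩
    · intro k b; simpa using hMb k b
    · simp only [dval]
      rw [Finset.sum_const, Finset.sum_const]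
      simp only [nsmul_eq_mul, Finset.card_univ, Fintype.card_fin, smul_zero]
      nlinarith
  obtain ⟨P, hP, hPmin⟩ := exists_min_on_Dset u lam C hne _ cont_dval
  obtain ⟨⟨hπ0, hq0, hfeas⟩, hPC⟩ := hP
  set π := P.1 with hπdef
  set q := P.2 with hqdef
  have hglob : ∀ π' q', DF u lam π' q' → dval π q ≤ dval π' q' := by
    intro π' q' hDF'
    by_cases h : dval π' q' ≤ C
    · exact hPmin (π', q') ⟨hDF', h⟩
    · exact le_trans hPC (le_of_not_ge h)
  set t : Fin n → Finset (Fin n) := fun k =>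
    univ.filter (fun b => lam k * u k b = π k + q b ∨ (π k = 0 ∧ q b = 0)) with ht
  have hslack : ∀ k b, b ∉ t k → 0 < π k + q b - lam k * u k b := by
    intro k b hb
    have hne' : lam k * u k b ≠ π k + q b := by
      intro h; exact hb (Finset.mem_filter.mpr ⟨Finset.mem_univ _, Or.inl h⟩)
    have := lt_of_le_of_ne (hfeas k b) hne'
    linarith
  have hall : ∀ A : Finset (Fin n), A.card ≤ (A.biUnion t).card := by
    intro A
    by_contra hAc
    push_neg at hAc
    set N := A.biUnion t with hN
    have hmemN : ∀ k ∈ A, ∀ b, b ∈ t k → b ∈ N := by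
      intro k hk b hb; exact Finset.mem_biUnion.mpr ⟨k, hk, hb⟩
    by_cases hcase : ∀ k ∈ A, 0 < π k
    · -- Case 1: decrease π on A, increase q on N
      obtain ⟨δ₁, hδ₁, hδ₁le⟩ := exists_pos_min (A ×ˢ (univ \ N))
        (fun kb => π kb.1 + q kb.2 - lam kb.1 * u kb.1 kb.2) (by
          rintro ⟨k, b⟩ hkb
          rw [Finset.mem_product, Finset.mem_sdiff] at hkb
          refine hslack k b fun hbt => hkb.2.2 (hmemN k hkb.1 b hbt))
      obtain ⟨δ₂, hδ₂, hδ₂le⟩ := exists_pos_min A π (fun k hk => hcase k hk)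
      set δ := min δ₁ δ₂ with hδdef
      have hδ : 0 < δ := lt_min hδ₁ hδ₂
      set π' := fun k => π k - if k ∈ A then δ else 0 with hπ'
      set q' := fun b => q b + if b ∈ N then δ else 0 with hq'
      have hDF' : DF u lam π' q' := by
        refine ⟨?_, ?_, ?_⟩
        · intro k
          simp only [hπ']
          by_cases hk : k ∈ A
          · rw [if_pos hk]
            have := hδ₂le k hk
            have := min_le_right δ₁ δ₂
            linarith
          · rw [if_neg hk]; simpa using hπ0 k
        · intro b
          simp only [hq']
          have := hq0 b
          by_cases hb : b ∈ N
          · rw [if_pos hb]; linarith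
          · rw [if_neg hb]; linarith
        · intro k b
          simp only [hπ', hq']
          by_cases hk : k ∈ A
          · by_cases hb : b ∈ N
            · rw [if_pos hk, if_pos hb]
              have := hfeas k b; linarith
            · rw [if_pos hk, if_neg hb]
              have h1 := hδ₁le (k, b) (Finset.mem_product.mpr
                ⟨hk, Finset.mem_sdiff.mpr ⟨Finset.mem_univ _, hb⟩⟩)
              have := min_le_left δ₁ δ₂
              simp only at h1
              linarith
          · rw [if_neg hk]
            have := hfeas k b
            by_cases hb : b ∈ N
            · rw [if_pos hb]; linarith
            · rw [if_neg hb]; linarith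
      have hval' : dval π' q' = dval π q - A.card * δ + N.card * δ := by
        simp only [dval, hπ', hq']
        rw [Finset.sum_sub_distrib, Finset.sum_add_distrib, sum_indicator, sum_indicator]
        ring
      have hge := hglob π' q' hDF'
      have hNA : (N.card : ℝ) < A.card := by exact_mod_cast hAc
      nlinarith
    · -- Case 2: some π k₀ = 0 on A
      push_neg at hcase
      obtain ⟨k₀, hk₀A, hk₀⟩ := hcase
      have hπk₀ : π k₀ = 0 := le_antisymm hk₀ (hπ0 k₀)
      set B := (univ : Finset (Fin n)) \ N with hB
      have hBQ : ∀ b ∈ B, 0 < q b := by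
        intro b hb
        rcases (hq0 b).lt_or_eq with h | h
        · exact h
        · exfalso
          have hbt : b ∈ t k₀ :=
            Finset.mem_filter.mpr ⟨Finset.mem_univ _, Or.inr ⟨hπk₀, h.symm⟩⟩
          exact (Finset.mem_sdiff.mp hb).2 (hmemN k₀ hk₀A b hbt)
      set A' := univ.filter (fun k => ∃ b ∈ B, b ∈ t k) with hA'
      have hA'A : ∀ k ∈ A', k ∉ A := by
        intro k hk hkA
        obtain ⟨b, hbB, hbt⟩ := (Finset.mem_filter.mp hk).2
        exact (Finset.mem_sdiff.mp hbB).2 (hmemN k hkA b hbt)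
      have hcard : A'.card < B.card := by
        have h1 : A' ⊆ univ \ A := fun k hk =>
          Finset.mem_sdiff.mpr ⟨Finset.mem_univ _, hA'A k hk⟩
        have h2 : A'.card ≤ (univ \ A).card := Finset.card_le_card h1
        have h3 : (univ \ A).card = n - A.card := by
          rw [Finset.card_sdiff_of_subset (Finset.subset_univ _)]
          simp
        have h4 : B.card = n - N.card := by
          rw [hB, Finset.card_sdiff_of_subset (Finset.subset_univ _)]
          simp
        have h5 : A.card ≤ n := by
          have := Finset.card_le_univ A
          simpa using this
        omega
      obtain ⟨δ₁, hδ₁, hδ₁le⟩ := exists_pos_min ((univ \ A') ×ˢ B)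
        (fun kb => π kb.1 + q kb.2 - lam kb.1 * u kb.1 kb.2) (by
          rintro ⟨k, b⟩ hkb
          rw [Finset.mem_product, Finset.mem_sdiff] at hkb
          refine hslack k b fun hbt => hkb.1.2 ?_
          exact Finset.mem_filter.mpr ⟨Finset.mem_univ _, ⟨b, hkb.2, hbt⟩⟩)
      obtain ⟨δ₂, hδ₂, hδ₂le⟩ := exists_pos_min B q (fun b hb => hBQ b hb)
      set δ := min δ₁ δ₂ with hδdef
      have hδ : 0 < δ := lt_min hδ₁ hδ₂
      set π' := fun k => π k + if k ∈ A' then δ else 0 with hπ'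
      set q' := fun b => q b - if b ∈ B then δ else 0 with hq'
      have hDF' : DF u lam π' q' := by
        refine ⟨?_, ?_, ?_⟩
        · intro k
          simp only [hπ']
          have := hπ0 k
          by_cases hk : k ∈ A'
          · rw [if_pos hk]; linarith
          · rw [if_neg hk]; linarith
        · intro b
          simp only [hq']
          by_cases hb : b ∈ B
          · rw [if_pos hb]
            have := hδ₂le b hb
            have := min_le_right δ₁ δ₂
            linarith
          · rw [if_neg hb]; simpa using hq0 b
        · intro k b
          simp only [hπ', hq']
          by_cases hb : b ∈ B
          · by_cases hk : k ∈ A'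
            · rw [if_pos hk, if_pos hb]
              have := hfeas k b; linarith
            · rw [if_neg hk, if_pos hb]
              have h1 := hδ₁le (k, b) (Finset.mem_product.mpr
                ⟨Finset.mem_sdiff.mpr ⟨Finset.mem_univ _, hk⟩, hb⟩)
              have := min_le_left δ₁ δ₂
              simp only at h1
              linarith
          · rw [if_neg hb]
            have := hfeas k b
            by_cases hk : k ∈ A'
            · rw [if_pos hk]; linarith
            · rw [if_neg hk]; linarith
      have hval' : dval π' q' = dval π q + A'.card * δ - B.card * δ := by
        simp only [dval, hπ', hq']
        rw [Finset.sum_add_distrib, Finset.sum_sub_distrib, sum_indicator, sum_indicator]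
        ring
      have hge := hglob π' q' hDF'
      have hAB : (A'.card : ℝ) < B.card := by exact_mod_cast hcard
      nlinarith
  obtain ⟨σ, hσinj, hσt⟩ := (Finset.all_card_le_biUnion_card_iff_exists_injective t).mp hall
  have hσbij : Function.Bijective σ := Finite.injective_iff_bijective.mp hσinj
  have hsumq : ∑ k, q (σ k) = ∑ b, q b :=
    Fintype.sum_bijective σ hσbij (fun k => q (σ k)) q (fun k => rfl)
  have hval_ge : dval π q ≤ pval u lam σ := by
    have h1 : ∀ k, π k + q (σ k) ≤ lam k * u k (σ k) := by
      intro k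
      rcases (Finset.mem_filter.mp (hσt k)).2 with h | ⟨h1, h2⟩
      · exact le_of_eq h.symm
      · rw [h1, h2]
        simpa using huv k (σ k)
    calc dval π q = ∑ k, (π k + q (σ k)) := by
          rw [dval, Finset.sum_add_distrib, hsumq]
      _ ≤ ∑ k, lam k * u k (σ k) := Finset.sum_le_sum fun k _ => h1 k
      _ = pval u lam σ := rfl
  have hple : pval u lam σ ≤ S := by
    have := hmax (fmat σ) (alloc_fmat hσbij)
    rwa [sum_pval] at this
  have hSle : S ≤ dval π q := weak_duality ⟨hπ0, hq0, hfeas⟩ x hx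
  exact ⟨π, q, σ, ⟨hπ0, hq0, hfeas⟩, hσbij,
    le_antisymm (le_trans hval_ge hple) hSle,
    le_antisymm hple (le_trans hSle hval_ge)⟩

end Strong

section MinDual
variable {u : Fin n → Fin n → ℝ} {lam : Fin n → ℝ} {x : Fin n → Fin n → ℝ}

theorem exists_min_dual (hu : ∀ i j, 0 ≤ u i j) (hlam : ∀ i, 0 ≤ lam i)
    (hx : IsAlloc x)
    (hmax : ∀ y, IsAlloc y →
      ∑ i, lam i * dotp (u i) (y i) ≤ ∑ i, lam i * dotp (u i) (x i)) :
    ∃ (Pi Q : Fin n → ℝ), DF u lam Pi Q ∧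
      dval Pi Q = ∑ i, lam i * dotp (u i) (x i) ∧
      ∀ π q, DF u lam π q → dval π q ≤ ∑ i, lam i * dotp (u i) (x i) →
        ∀ j, Q j ≤ q j := by
  classical
  set S := ∑ i, lam i * dotp (u i) (x i) with hS
  obtain ⟨π₀, q₀, σ₀, hDF₀, _, hval₀, _⟩ := strong_duality hu hlam hx hmax
  have hne : (Dset u lam S).Nonempty := ⟨(π₀, q₀), hDF₀, le_of_eq hval₀⟩
  -- meet of two elements of Dstar is in Dstar
  have hmeet : ∀ p₁ p₂ : (Fin n → ℝ) × (Fin n → ℝ), p₁ ∈ Dset u lam S →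
      p₂ ∈ Dset u lam S →
      ((fun k => max (p₁.1 k) (p₂.1 k), fun b => min (p₁.2 b) (p₂.2 b)) :
        (Fin n → ℝ) × (Fin n → ℝ)) ∈ Dset u lam S := by
    rintro ⟨π₁, q₁⟩ ⟨π₂, q₂⟩ ⟨⟨h1a, h1b, h1c⟩, h1v⟩ ⟨⟨h2a, h2b, h2c⟩, h2v⟩
    have hjoin : DF u lam (fun k => min (π₁ k) (π₂ k)) (fun b => max (q₁ b) (q₂ b)) := by
      refine ⟨fun k => le_min (h1a k) (h2a k), fun b => le_trans (h1b b) (le_max_left _ _), ?_⟩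
      intro k b
      rcases le_total (π₁ k) (π₂ k) with h | h
      · simp only [min_eq_left h]
        exact le_trans (h1c k b) (add_le_add_right (le_max_left _ _) _)
      · simp only [min_eq_right h]
        exact le_trans (h2c k b) (add_le_add_right (le_max_right _ _) _)
    have hjval : S ≤ dval (fun k => min (π₁ k) (π₂ k)) (fun b => max (q₁ b) (q₂ b)) :=
      weak_duality hjoin x hx
    refine ⟨⟨fun k => le_trans (h1a k) (le_max_left _ _),
      fun b => le_min (h1b b) (h2b b), ?_⟩, ?_⟩
    · intro k b
      rcases le_total (q₁ b) (q₂ b) with h | h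
      · simp only [min_eq_left h]
        exact le_trans (h1c k b) (add_le_add_left (le_max_left _ _) _)
      · simp only [min_eq_right h]
        exact le_trans (h2c k b) (add_le_add_left (le_max_right _ _) _)
    · -- value bound via max_add_min
      have hA : ∑ k, max (π₁ k) (π₂ k) + ∑ k, min (π₁ k) (π₂ k)
          = (∑ k, π₁ k) + ∑ k, π₂ k := by
        rw [← Finset.sum_add_distrib, ← Finset.sum_add_distrib]
        exact Finset.sum_congr rfl fun k _ => max_add_min _ _
      have hBq : ∑ b, min (q₁ b) (q₂ b) + ∑ b, max (q₁ b) (q₂ b)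
          = (∑ b, q₁ b) + ∑ b, q₂ b := by
        rw [← Finset.sum_add_distrib, ← Finset.sum_add_distrib]
        exact Finset.sum_congr rfl fun b _ => min_add_max _ _
      simp only [dval] at hjval h1v h2v ⊢
      linarith
  have fold : ∀ s : Finset (Fin n), ∃ p ∈ Dset u lam S,
      ∀ j ∈ s, ∀ p' ∈ Dset u lam S, p.2 j ≤ p'.2 j := by
    intro s
    induction s using Finset.induction with
    | empty =>
      obtain ⟨p, hp⟩ := hne
      exact ⟨p, hp, by simp⟩
    | @insert j s hj ih =>
      obtain ⟨p₁, hp₁, hmin₁⟩ := ih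
      obtain ⟨p₂, hp₂, hmin₂⟩ := exists_min_on_Dset u lam S hne
        (fun p => p.2 j) (cont_coord2 j)
      refine ⟨_, hmeet p₂ p₁ hp₂ hp₁, ?_⟩
      intro j' hj' p' hp'
      rcases Finset.mem_insert.mp hj' with rfl | hj'
      · exact le_trans (min_le_left _ _) (hmin₂ p' hp')
      · exact le_trans (min_le_right _ _) (hmin₁ j' hj' p' hp')
  obtain ⟨⟨Pi, Q⟩, ⟨hDF, hvle⟩, hminall⟩ := fold univ
  have hveq : dval Pi Q = S := le_antisymm hvle (weak_duality hDF x hx)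
  exact ⟨Pi, Q, hDF, hveq,
    fun π q hdf hd j => hminall j (Finset.mem_univ j) (π, q) ⟨hdf, hd⟩⟩

end MinDual

open scoped Classical in
/-- goods reachable from `m` along tight edges through the assignment `σ` -/
noncomputable def Rs (T : Fin n → Fin n → Prop) (σ : Fin n → Fin n) (m : Fin n) :
    ℕ → Finset (Fin n)
  | 0 => {m}
  | K+1 => Rs T σ m K ∪
      univ.filter (fun b' => ∃ k₀ b, σ k₀ = b' ∧ b ∈ Rs T σ m K ∧ T k₀ b)

open scoped Classical

lemma Rs_zero (T : Fin n → Fin n → Prop) (σ : Fin n → Fin n) (m : Fin n) :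
    Rs T σ m 0 = {m} := rfl

lemma Rs_succ (T : Fin n → Fin n → Prop) (σ : Fin n → Fin n) (m : Fin n) (K : ℕ) :
    Rs T σ m (K+1) = Rs T σ m K ∪
      univ.filter (fun b' => ∃ k₀ b, σ k₀ = b' ∧ b ∈ Rs T σ m K ∧ T k₀ b) := rfl

lemma Rs_mono (T : Fin n → Fin n → Prop) (σ : Fin n → Fin n) (m : Fin n) (K : ℕ) :
    Rs T σ m K ⊆ Rs T σ m (K+1) := by
  rw [Rs_succ]; exact Finset.subset_union_left

lemma mem_Rs_self (T : Fin n → Fin n → Prop) (σ : Fin n → Fin n) (m : Fin n) (K : ℕ) :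
    m ∈ Rs T σ m K := by
  induction K with
  | zero => simp [Rs_zero]
  | succ K ih => exact Rs_mono T σ m K ih

section Claim
variable {u : Fin n → Fin n → ℝ} {lam : Fin n → ℝ} {Pi0 Q : Fin n → ℝ}
  {σ : Fin n → Fin n}

lemma claim (hσbij : Function.Bijective σ)
    (htight : ∀ k, lam k * u k (σ k) = Pi0 k + Q (σ k)) (m : Fin n) :
    ∀ K, ∀ b ∈ Rs (fun k bb => lam k * u k bb = Pi0 k + Q bb) σ m K,
      ∃ τ : Fin n → Fin n,
        (∀ g, cnt τ g ≤ if g = m then 2 else 1) ∧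
        (cnt τ b + 1 ≤ if b = m then 2 else 1) ∧
        (∀ k, τ k ≠ σ k → σ k ∈ Rs (fun k bb => lam k * u k bb = Pi0 k + Q bb) σ m K) ∧
        (∀ k, τ k ≠ σ k → τ k ∈ Rs (fun k bb => lam k * u k bb = Pi0 k + Q bb) σ m K) ∧
        pval u lam σ + Q m - Q b ≤ pval u lam τ := by
  set T := fun k bb => lam k * u k bb = Pi0 k + Q bb with hT
  intro K
  induction K with
  | zero =>
    intro b hb
    rw [Rs_zero, Finset.mem_singleton] at hb
    subst hb
    refine ⟨σ, ?_, ?_, ?_, ?_, ?_⟩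
    · intro g; rw [cnt_bij hσbij]; split_ifs <;> omega
    · rw [cnt_bij hσbij, if_pos rfl]
    · exact fun k hk => absurd rfl hk
    · exact fun k hk => absurd rfl hk
    · have : pval u lam σ + Q b - Q b = pval u lam σ := by ring
      rw [this]
  | succ K ih =>
    intro b' hb'
    rw [Rs_succ] at hb'
    rcases Finset.mem_union.mp hb' with hb'K | hb'f
    · obtain ⟨τ, h1, h2, h3, h4, h5⟩ := ih b' hb'K
      exact ⟨τ, h1, h2, fun k hk => Rs_mono T σ m K (h3 k hk),
        fun k hk => Rs_mono T σ m K (h4 k hk), h5⟩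
    · obtain ⟨k₀, b, hσk₀, hbK, hTk⟩ := (Finset.mem_filter.mp hb'f).2
      by_cases hb'K : b' ∈ Rs T σ m K
      · obtain ⟨τ, h1, h2, h3, h4, h5⟩ := ih b' hb'K
        exact ⟨τ, h1, h2, fun k hk => Rs_mono T σ m K (h3 k hk),
          fun k hk => Rs_mono T σ m K (h4 k hk), h5⟩
      obtain ⟨τ, hcnt, hspare, hmod1, hmod2, hval⟩ := ih b hbK
      have hk₀τ : τ k₀ = σ k₀ := by
        by_contra h
        exact hb'K (hσk₀ ▸ hmod1 k₀ h)
      have hbne : b ≠ b' := fun h => hb'K (h ▸ hbK)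
      have hb'm : b' ≠ m := fun h => hb'K (h ▸ mem_Rs_self T σ m K)
      have huniq : ∀ k, τ k = b' → k = k₀ := by
        intro k hk
        by_cases hmod : τ k = σ k
        · exact hσbij.injective (by rw [← hmod, hk, hσk₀])
        · exact absurd (hk ▸ hmod2 k hmod) hb'K
      set τ' := Function.update τ k₀ b with hτ'
      have hτ'k₀ : τ' k₀ = b := Function.update_self k₀ b τ
      have hτ'ne : ∀ k, k ≠ k₀ → τ' k = τ k := fun k hk =>
        Function.update_of_ne hk b τ
      have hcnt_b' : cnt τ' b' = 0 := by
        rw [cnt, Finset.card_eq_zero]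
        apply Finset.eq_empty_of_forall_notMem
        intro k hk
        have hk' := (Finset.mem_filter.mp hk).2
        by_cases h : k = k₀
        · subst h; rw [hτ'k₀] at hk'; exact hbne hk'
        · rw [hτ'ne k h] at hk'; exact h (huniq k hk')
      have hcnt_b : cnt τ' b ≤ cnt τ b + 1 := by
        rw [cnt, cnt]
        have hsub : univ.filter (fun k => τ' k = b) ⊆
            insert k₀ (univ.filter (fun k => τ k = b)) := by
          intro k hk
          have hk' := (Finset.mem_filter.mp hk).2
          by_cases h : k = k₀
          · subst h; exact Finset.mem_insert_self _ _
          · rw [hτ'ne k h] at hk'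
            exact Finset.mem_insert_of_mem
              (Finset.mem_filter.mpr ⟨Finset.mem_univ _, hk'⟩)
        calc (univ.filter (fun k => τ' k = b)).card
            ≤ (insert k₀ (univ.filter (fun k => τ k = b))).card :=
              Finset.card_le_card hsub
          _ ≤ (univ.filter (fun k => τ k = b)).card + 1 := Finset.card_insert_le _ _
      have hcnt_other : ∀ g, g ≠ b → g ≠ b' → cnt τ' g = cnt τ g := by
        intro g hgb hgb'
        rw [cnt, cnt]
        congr 1
        apply Finset.filter_congr
        intro k _
        by_cases h : k = k₀
        · subst h
          constructor
          · intro hh; rw [hτ'k₀] at hh; exact absurd hh.symm hgb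
          · intro hh; rw [hk₀τ, hσk₀] at hh; exact absurd hh.symm hgb'
        · rw [hτ'ne k h]
      refine ⟨τ', ?_, ?_, ?_, ?_, ?_⟩
      · intro g
        by_cases hgb' : g = b'
        · subst hgb'; rw [hcnt_b']; omega
        by_cases hgb : g = b
        · subst hgb
          calc cnt τ' g ≤ cnt τ g + 1 := hcnt_b
            _ ≤ if g = m then 2 else 1 := hspare
        · rw [hcnt_other g hgb hgb']; exact hcnt g
      · rw [hcnt_b', if_neg hb'm]
      · intro k hk
        by_cases h : k = k₀
        · rw [Rs_succ, h, hσk₀]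
          apply Finset.mem_union_right
          exact Finset.mem_filter.mpr ⟨Finset.mem_univ _, k₀, b, hσk₀, hbK, hTk⟩
        · rw [hτ'ne k h] at hk
          exact Rs_mono T σ m K (hmod1 k hk)
      · intro k hk
        by_cases h : k = k₀
        · subst h
          rw [hτ'k₀]
          exact Rs_mono T σ m K hbK
        · rw [hτ'ne k h] at hk ⊢
          exact Rs_mono T σ m K (hmod2 k hk)
      · have hsplit : ∀ ρ : Fin n → Fin n, pval u lam ρ =
            (∑ k ∈ univ.erase k₀, lam k * u k (ρ k)) + lam k₀ * u k₀ (ρ k₀) := by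
          intro ρ
          rw [pval, ← Finset.sum_erase_add univ _ (Finset.mem_univ k₀)]
        have heq : ∑ k ∈ univ.erase k₀, lam k * u k (τ' k)
            = ∑ k ∈ univ.erase k₀, lam k * u k (τ k) := by
          apply Finset.sum_congr rfl
          intro k hk
          rw [hτ'ne k (Finset.ne_of_mem_erase hk)]
        have hv1 : lam k₀ * u k₀ (τ k₀) = Pi0 k₀ + Q b' := by
          rw [hk₀τ, htight k₀, hσk₀]
        have hv2 : lam k₀ * u k₀ (τ' k₀) = Pi0 k₀ + Q b := by
          rw [hτ'k₀]; exact hTk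
        have : pval u lam τ' = pval u lam τ + Q b - Q b' := by
          rw [hsplit τ', hsplit τ, heq, hv1, hv2]; ring
        rw [this]
        linarith
end Claim

section Lower
variable {u : Fin n → Fin n → ℝ} {lam : Fin n → ℝ} {x : Fin n → Fin n → ℝ}

lemma wrelax_lower (hu : ∀ i j, 0 ≤ u i j) (hlam : ∀ i, 0 ≤ lam i)
    (hx : IsAlloc x)
    (hmax : ∀ y, IsAlloc y →
      ∑ i, lam i * dotp (u i) (y i) ≤ ∑ i, lam i * dotp (u i) (x i))
    (Pi0 Q : Fin n → ℝ) (hDF : DF u lam Pi0 Q)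
    (hveq : dval Pi0 Q = ∑ i, lam i * dotp (u i) (x i))
    (hmin : ∀ π q, DF u lam π q → dval π q ≤ ∑ i, lam i * dotp (u i) (x i) →
      ∀ j, Q j ≤ q j)
    (σ : Fin n → Fin n) (hσbij : Function.Bijective σ)
    (hσS : pval u lam σ = ∑ i, lam i * dotp (u i) (x i))
    (m : Fin n) :
    (∑ i, lam i * dotp (u i) (x i)) + Q m ≤ Wrelax u lam m := by
  classical
  set S := ∑ i, lam i * dotp (u i) (x i) with hS
  set T := fun k bb => lam k * u k bb = Pi0 k + Q bb with hT
  -- tightness of σ against (Pi0, Q)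
  have hsumq : ∑ k, Q (σ k) = ∑ b, Q b :=
    Fintype.sum_bijective σ hσbij (fun k => Q (σ k)) Q (fun k => rfl)
  have htight : ∀ k, lam k * u k (σ k) = Pi0 k + Q (σ k) := by
    have hzero : ∑ k, (Pi0 k + Q (σ k) - lam k * u k (σ k)) = 0 := by
      rw [Finset.sum_sub_distrib, Finset.sum_add_distrib, hsumq]
      have : (∑ k, Pi0 k) + ∑ b, Q b = dval Pi0 Q := rfl
      rw [this, hveq]
      have : ∑ k, lam k * u k (σ k) = pval u lam σ := rfl
      rw [this, hσS, sub_self]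
    have hnn : ∀ k ∈ univ, 0 ≤ Pi0 k + Q (σ k) - lam k * u k (σ k) := by
      intro k _
      have := hDF.2.2 k (σ k)
      linarith
    have := (Finset.sum_eq_zero_iff_of_nonneg hnn).mp hzero
    intro k
    have hk := this k (Finset.mem_univ k)
    linarith
  -- bound on the relaxed problem values
  have hbdd : ∀ v ∈ (fun z => ∑ i, lam i * dotp (u i) (z i)) '' {z | FeasRelax m z},
      v ≤ S + Q m := by
    rintro v ⟨z, hz, rfl⟩
    have := relax_bound hDF m z hz
    rw [hveq] at this
    exact this
  by_cases hzero : ∃ K, ∃ bz ∈ Rs T σ m K, Q bz = 0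
  · obtain ⟨K, bz, hbz, hQbz⟩ := hzero
    obtain ⟨τ, hcnt, _, _, _, hval⟩ := claim hσbij htight m K bz hbz
    have hfr : FeasRelax m (fmat τ) := feasRelax_fmat m τ hcnt
    have hmem : pval u lam τ ∈
        (fun z => ∑ i, lam i * dotp (u i) (z i)) '' {z | FeasRelax m z} :=
      ⟨fmat τ, hfr, sum_pval u lam τ⟩
    have h1 : S + Q m ≤ pval u lam τ := by
      rw [hσS] at hval
      rw [hQbz] at hval
      linarith
    calc S + Q m ≤ pval u lam τ := h1
      _ ≤ Wrelax u lam m := le_csSup ⟨S + Q m, hbdd⟩ hmem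
  · push_neg at hzero
    exfalso
    set RR := univ.filter (fun bb => ∃ K, bb ∈ Rs T σ m K) with hRR
    have hmRR : m ∈ RR := Finset.mem_filter.mpr ⟨Finset.mem_univ _,
      ⟨0, mem_Rs_self T σ m 0⟩⟩
    have hQpos : ∀ bb ∈ RR, 0 < Q bb := by
      intro bb hbb
      obtain ⟨K, hbbK⟩ := (Finset.mem_filter.mp hbb).2
      exact lt_of_le_of_ne (hDF.2.1 bb) (Ne.symm (hzero K bb hbbK))
    have hclose : ∀ bb ∈ RR, ∀ k, T k bb → σ k ∈ RR := by
      intro bb hbb k hTk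
      obtain ⟨K, hbbK⟩ := (Finset.mem_filter.mp hbb).2
      refine Finset.mem_filter.mpr ⟨Finset.mem_univ _, ⟨K+1, ?_⟩⟩
      rw [Rs_succ]
      exact Finset.mem_union_right _
        (Finset.mem_filter.mpr ⟨Finset.mem_univ _, k, bb, rfl, hbbK, hTk⟩)
    set A := univ.filter (fun k => σ k ∈ RR) with hA
    have hcardeq : A.card = RR.card := by
      apply Finset.card_bij (fun k _ => σ k)
      · intro k hk; exact (Finset.mem_filter.mp hk).2
      · intro k1 h1 k2 h2 h; exact hσbij.injective h
      · intro bb hbb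
        obtain ⟨k, hk⟩ := hσbij.surjective bb
        exact ⟨k, Finset.mem_filter.mpr ⟨Finset.mem_univ _, by rwa [hk]⟩, hk⟩
    obtain ⟨δ₁, hδ₁, hδ₁le⟩ := exists_pos_min ((univ \ A) ×ˢ RR)
      (fun kb => Pi0 kb.1 + Q kb.2 - lam kb.1 * u kb.1 kb.2) (by
        rintro ⟨k, bb⟩ hkb
        rw [Finset.mem_product, Finset.mem_sdiff] at hkb
        have hne' : ¬ T k bb := by
          intro hTk
          exact hkb.1.2 (Finset.mem_filter.mpr ⟨Finset.mem_univ _,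
            hclose bb hkb.2 k hTk⟩)
        show 0 < Pi0 k + Q bb - lam k * u k bb
        have := hDF.2.2 k bb
        rcases this.lt_or_eq with h | h
        · linarith
        · exact absurd h hne')
    obtain ⟨δ₂, hδ₂, hδ₂le⟩ := exists_pos_min RR Q (fun bb hbb => hQpos bb hbb)
    set δ := min δ₁ δ₂ with hδdef
    have hδ : 0 < δ := lt_min hδ₁ hδ₂
    set π' := fun k => Pi0 k + if k ∈ A then δ else 0 with hπ'
    set q' := fun bb => Q bb - if bb ∈ RR then δ else 0 with hq'
    have hDF' : DF u lam π' q' := by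
      refine ⟨?_, ?_, ?_⟩
      · intro k
        simp only [hπ']
        have := hDF.1 k
        by_cases hk : k ∈ A
        · rw [if_pos hk]; linarith
        · rw [if_neg hk]; linarith
      · intro bb
        simp only [hq']
        by_cases hbb : bb ∈ RR
        · rw [if_pos hbb]
          have := hδ₂le bb hbb
          have := min_le_right δ₁ δ₂
          linarith
        · rw [if_neg hbb]; simpa using hDF.2.1 bb
      · intro k bb
        simp only [hπ', hq']
        by_cases hbb : bb ∈ RR
        · by_cases hk : k ∈ A
          · rw [if_pos hk, if_pos hbb]
            have := hDF.2.2 k bb; linarith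
          · rw [if_neg hk, if_pos hbb]
            have h1 := hδ₁le (k, bb) (Finset.mem_product.mpr
              ⟨Finset.mem_sdiff.mpr ⟨Finset.mem_univ _, hk⟩, hbb⟩)
            have := min_le_left δ₁ δ₂
            simp only at h1
            linarith
        · rw [if_neg hbb]
          have := hDF.2.2 k bb
          by_cases hk : k ∈ A
          · rw [if_pos hk]; linarith
          · rw [if_neg hk]; linarith
    have hval' : dval π' q' = S := by
      simp only [dval, hπ', hq']
      rw [Finset.sum_add_distrib, Finset.sum_sub_distrib, sum_indicator, sum_indicator,
        hcardeq]
      have : dval Pi0 Q = S := hveq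
      simp only [dval] at this
      linarith
    have := hmin π' q' hDF' (le_of_eq hval') m
    simp only [hq', if_pos hmRR] at this
    linarith
end Lower

end VCGP


/-- at a weighted-welfare-maximizing allocation, any bundle weakly
preferred by agent `i` costs at least as much as `x_i` at the VCG prices. -/
theorem vcg_preferred_costs_more {n : ℕ} (hn : 0 < n) (u : Fin n → Fin n → ℝ)
    (hu : ∀ i j, 0 ≤ u i j)
    (lam : Fin n → ℝ) (hlam : ∀ i, 0 ≤ lam i)
    (x : Fin n → Fin n → ℝ) (hx : IsAlloc x)
    (hmax : ∀ y, IsAlloc y →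
      ∑ i, lam i * dotp (u i) (y i) ≤ ∑ i, lam i * dotp (u i) (x i)) :
    ∀ (i : Fin n) (y : Fin n → ℝ), InSimplexLe y →
      dotp (u i) (x i) ≤ dotp (u i) y →
      dotp (vcg u lam) (x i) ≤ dotp (vcg u lam) y := by
  classical
  intro i y hy hpref
  set S := ∑ i', lam i' * dotp (u i') (x i') with hS
  obtain ⟨Pi0, Q, hDF, hveq, hmin⟩ := VCGP.exists_min_dual hu hlam hx hmax
  obtain ⟨π₀, q₀, σ, hDF₀, hσbij, hval₀, hσS⟩ := VCGP.strong_duality hu hlam hx hmax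
  have hW : Wval u lam = S := VCGP.Wval_eq hx hmax
  have hWr : ∀ m, Wrelax u lam m = S + Q m := by
    intro m
    apply le_antisymm
    · apply csSup_le
      · exact ⟨_, ⟨0, ⟨fun _ _ => le_refl 0, fun _ => by norm_num,
          fun _ _ => by norm_num, by norm_num⟩, rfl⟩⟩
      · rintro v ⟨z, hz, rfl⟩
        have := VCGP.relax_bound hDF m z hz
        rwa [hveq] at this
    · exact VCGP.wrelax_lower hu hlam hx hmax Pi0 Q hDF hveq hmin σ hσbij hσS m
  have hvcg : ∀ m, vcg u lam m = Q m := by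
    intro m
    show Wrelax u lam m - Wval u lam = Q m
    rw [hW, hWr m]
    ring
  -- complementary slackness for x against (Pi0, Q)
  set F := fun k j => x k j * (Pi0 k + Q j - lam k * u k j) with hF
  have hFnn : ∀ k j, 0 ≤ F k j := by
    intro k j
    have h1 := hDF.2.2 k j
    have h2 := hx.1 k j
    have : 0 ≤ Pi0 k + Q j - lam k * u k j := by linarith
    exact mul_nonneg h2 this
  have hFsum : ∑ k, ∑ j, F k j = 0 := by
    have e1 : ∑ k, ∑ j, x k j * Pi0 k = ∑ k, Pi0 k := by
      refine Finset.sum_congr rfl fun k _ => ?_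
      rw [← Finset.sum_mul, hx.2.1 k, one_mul]
    have e2 : ∑ k, ∑ j, x k j * Q j = ∑ j, Q j := by
      rw [Finset.sum_comm]
      refine Finset.sum_congr rfl fun j _ => ?_
      rw [← Finset.sum_mul, hx.2.2 j, one_mul]
    have e3 : ∑ k, ∑ j, x k j * (lam k * u k j) = S := by
      rw [hS]
      refine Finset.sum_congr rfl fun k _ => ?_
      rw [dotp, Finset.mul_sum]
      refine Finset.sum_congr rfl fun j _ => by ring
    have esplit : ∑ k, ∑ j, F k j =
        (∑ k, ∑ j, x k j * Pi0 k) + (∑ k, ∑ j, x k j * Q j)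
          - ∑ k, ∑ j, x k j * (lam k * u k j) := by
      rw [← Finset.sum_add_distrib, ← Finset.sum_sub_distrib]
      refine Finset.sum_congr rfl fun k _ => ?_
      rw [← Finset.sum_add_distrib, ← Finset.sum_sub_distrib]
      refine Finset.sum_congr rfl fun j _ => by rw [hF]; ring
    rw [esplit, e1, e2, e3]
    have : (∑ k, Pi0 k) + ∑ j, Q j = VCGP.dval Pi0 Q := rfl
    rw [this, hveq]
    ring
  have hFzero : ∀ j, F i j = 0 := by
    have houter := (Finset.sum_eq_zero_iff_of_nonneg
      (fun k _ => Finset.sum_nonneg fun j _ => hFnn k j)).mp hFsum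
    have hinner := houter i (Finset.mem_univ i)
    have := (Finset.sum_eq_zero_iff_of_nonneg (fun j _ => hFnn i j)).mp hinner
    exact fun j => this j (Finset.mem_univ j)
  have hxi : ∑ j, Q j * x i j = lam i * dotp (u i) (x i) - Pi0 i := by
    have hsum : ∑ j, x i j * (Pi0 i + Q j) = ∑ j, x i j * (lam i * u i j) := by
      refine Finset.sum_congr rfl fun j _ => ?_
      have := hFzero j
      rw [hF] at this
      dsimp only at this
      nlinarith [this]
    have hlhs : ∑ j, x i j * (Pi0 i + Q j) = Pi0 i + ∑ j, Q j * x i j := by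
      have : ∑ j, x i j * (Pi0 i + Q j) = (∑ j, x i j * Pi0 i) + ∑ j, x i j * Q j := by
        rw [← Finset.sum_add_distrib]
        exact Finset.sum_congr rfl fun j _ => by ring
      rw [this, ← Finset.sum_mul, hx.2.1 i, one_mul]
      congr 1
      exact Finset.sum_congr rfl fun j _ => by ring
    have hrhs : ∑ j, x i j * (lam i * u i j) = lam i * dotp (u i) (x i) := by
      rw [dotp, Finset.mul_sum]
      exact Finset.sum_congr rfl fun j _ => by ring
    rw [hlhs, hrhs] at hsum
    linarith
  have hgoal_l : dotp (vcg u lam) (x i) = lam i * dotp (u i) (x i) - Pi0 i := by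
    rw [dotp]
    rw [show ∑ j, vcg u lam j * x i j = ∑ j, Q j * x i j from
      Finset.sum_congr rfl fun j _ => by rw [hvcg j]]
    exact hxi
  have hgoal_r : lam i * dotp (u i) (x i) - Pi0 i ≤ dotp (vcg u lam) y := by
    have h1 : dotp (vcg u lam) y = ∑ j, Q j * y j := by
      rw [dotp]
      exact Finset.sum_congr rfl fun j _ => by rw [hvcg j]
    have h2 : ∀ j, (lam i * u i j - Pi0 i) * y j ≤ Q j * y j := by
      intro j
      have := hDF.2.2 i j
      exact mul_le_mul_of_nonneg_right (by linarith) (hy.1 j)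
    have h3 : ∑ j, (lam i * u i j - Pi0 i) * y j
        = lam i * dotp (u i) y - Pi0 i * ∑ j, y j := by
      rw [dotp, Finset.mul_sum, Finset.mul_sum, ← Finset.sum_sub_distrib]
      exact Finset.sum_congr rfl fun j _ => by ring
    have h4 : lam i * dotp (u i) (x i) ≤ lam i * dotp (u i) y :=
      mul_le_mul_of_nonneg_left hpref (hlam i)
    have h5 : Pi0 i * ∑ j, y j ≤ Pi0 i :=
      le_trans (mul_le_mul_of_nonneg_left hy.2 (hDF.1 i)) (by rw [mul_one])
    calc lam i * dotp (u i) (x i) - Pi0 i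
        ≤ lam i * dotp (u i) y - Pi0 i * ∑ j, y j := by linarith
      _ = ∑ j, (lam i * u i j - Pi0 i) * y j := h3.symm
      _ ≤ ∑ j, Q j * y j := Finset.sum_le_sum fun j _ => h2 j
      _ = dotp (vcg u lam) y := h1.symm
  rw [hgoal_l]
  exact hgoal_r
end

section
/- Let λ ∈ ℝⁿ with λ_i > 0 for every agent i, and suppose the VCG price vector satisfies p(λ) = 0. Then every allocation x maximizing ∑_i λ_i (u_i · y_i) over y ∈ M satisfies u_i · x_i = max_j u_{ij} for every agent i; that is, each agent attains the utility of her favorite good. -/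
open Finset

/-- if all weights are positive and the VCG prices vanish, every
weighted-welfare-maximizing allocation gives each agent the utility of her
favorite good. -/
theorem zero_prices_imply_favorite_good {n : ℕ} (hn : 0 < n)
    (u : Fin n → Fin n → ℝ) (hu : ∀ i j, 0 ≤ u i j)
    (lam : Fin n → ℝ) (hlam : ∀ i, 0 < lam i)
    (hp : ∀ l : Fin n, vcg u lam l = 0)
    (x : Fin n → Fin n → ℝ) (hx : IsAlloc x)
    (hmax : ∀ y, IsAlloc y →
      ∑ i, lam i * dotp (u i) (y i) ≤ ∑ i, lam i * dotp (u i) (x i)) :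
    ∀ i : Fin n, IsGreatest (Set.range (u i)) (dotp (u i) (x i)) := by
  intro i
  obtain ⟨l, -, hl⟩ := Finset.exists_max_image Finset.univ (u i) ⟨i, Finset.mem_univ i⟩
  have hxn := hx.1
  have hxr := hx.2.1
  have hxc := hx.2.2
  -- welfare of x equals Wval
  have hW : Wval u lam = ∑ k, lam k * dotp (u k) (x k) := by
    apply IsGreatest.csSup_eq
    constructor
    · exact ⟨x, hx, rfl⟩
    · rintro w ⟨y, hy, rfl⟩; exact hmax y hy
  -- upper bound: dotp ≤ u i l
  have hub : dotp (u i) (x i) ≤ u i l := by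
    calc dotp (u i) (x i) = ∑ j, u i j * x i j := rfl
      _ ≤ ∑ j, u i l * x i j := by
          apply Finset.sum_le_sum; intro j _
          exact mul_le_mul_of_nonneg_right (hl j (Finset.mem_univ j)) (hxn i j)
      _ = u i l := by rw [← Finset.mul_sum, hxr i, mul_one]
  -- the deviating allocation
  set e : Fin n → ℝ := fun j => if j = l then 1 else 0 with he
  set y : Fin n → Fin n → ℝ := fun k => if k = i then e else x k with hy
  have hesum : ∑ j, e j = 1 := by simp [he]
  have hfeas : FeasRelax l y := by
    refine ⟨?_, ?_, ?_, ?_⟩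
    · intro k j
      by_cases hk : k = i <;> simp [hy, hk, he]
      · positivity
      · exact hxn k j
    · intro k
      by_cases hk : k = i <;> simp [hy, hk, hesum, (hxr k).le]
    · intro j hj
      calc ∑ k, y k j ≤ ∑ k, x k j := by
            apply Finset.sum_le_sum; intro k _
            by_cases hk : k = i <;> simp [hy, hk, he, hj]
            exact hxn i j
        _ = 1 := hxc j
    · calc ∑ k, y k l ≤ ∑ k, (x k l + if k = i then 1 else 0) := by
            apply Finset.sum_le_sum; intro k _
            by_cases hk : k = i <;> simp [hy, hk, he]
            exact hxn i l
        _ = 1 + 1 := by rw [Finset.sum_add_distrib, hxc l]; simp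
        _ ≤ 2 := by norm_num
  have hdote : dotp (u i) e = u i l := by
    simp [dotp, he, mul_ite]
  have hvaly : ∑ k, lam k * dotp (u k) (y k)
      = lam i * u i l + ∑ k ∈ Finset.univ.erase i, lam k * dotp (u k) (x k) := by
    rw [← Finset.add_sum_erase _ _ (Finset.mem_univ i)]
    congr 1
    · simp [hy, hdote]
    · apply Finset.sum_congr rfl
      intro k hk
      have : k ≠ i := (Finset.mem_erase.mp hk).1
      simp [hy, this]
  have hvalx : ∑ k, lam k * dotp (u k) (x k)
      = lam i * dotp (u i) (x i) + ∑ k ∈ Finset.univ.erase i, lam k * dotp (u k) (x k) :=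
    (Finset.add_sum_erase _ _ (Finset.mem_univ i)).symm
  have hBdd : BddAbove ((fun z => ∑ k, lam k * dotp (u k) (z k)) '' {z | FeasRelax l z}) := by
    refine ⟨∑ k, lam k * ∑ j, u k j, ?_⟩
    rintro w ⟨z, hz, rfl⟩
    apply Finset.sum_le_sum
    intro k _
    apply mul_le_mul_of_nonneg_left _ (hlam k).le
    apply Finset.sum_le_sum
    intro j _
    have hzj : z k j ≤ 1 := by
      calc z k j ≤ ∑ j', z k j' :=
            Finset.single_le_sum (fun j' _ => hz.1 k j') (Finset.mem_univ j)
        _ ≤ 1 := hz.2.1 k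
    calc u k j * z k j ≤ u k j * 1 := mul_le_mul_of_nonneg_left hzj (hu k j)
      _ = u k j := mul_one _
  have hle : ∑ k, lam k * dotp (u k) (y k) ≤ Wrelax u lam l :=
    le_csSup hBdd ⟨y, hfeas, rfl⟩
  have hWeq : Wrelax u lam l = Wval u lam := by
    have := hp l; unfold vcg at this; linarith
  have hge : u i l ≤ dotp (u i) (x i) := by
    have h1 : ∑ k, lam k * dotp (u k) (y k) ≤ ∑ k, lam k * dotp (u k) (x k) := by
      rw [← hW, ← hWeq]; exact hle
    rw [hvaly, hvalx] at h1
    have hli := hlam i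
    nlinarith
  have heq : dotp (u i) (x i) = u i l := le_antisymm hub hge
  rw [heq]
  exact ⟨⟨l, rfl⟩, by rintro a ⟨j, rfl⟩; exact hl j (Finset.mem_univ j)⟩
end
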